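/- A finite product of compact metrizable C-spaces is a C-space. In particular, if K is a compact metrizable C-space then K^p is a C-space for every p ∈ ℕ. -/

import Mathlib

open Set TopologicalSpace

/-- `L` is a partition between `A` and `B` in `X`. -/
def IsPartitionBetween (X : Type*) [TopologicalSpace X] (L A B : Set X) : Prop :=
  IsClosed L ∧ ∃ U V : Set X, IsOpen U ∧ IsOpen V ∧ A ⊆ U ∧ B ⊆ V ∧
    Disjoint U V ∧ Lᶜ = U ∪ V

/-- `{(A i, B i)}` is an essential family of pairs of disjoint closed sets:
any choice of partitions between the pairs has nonempty intersection. -/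
def EssentialFamily (X : Type*) [TopologicalSpace X] (A B : ℕ → Set X) : Prop :=
  (∀ i, IsClosed (A i) ∧ IsClosed (B i) ∧ Disjoint (A i) (B i)) ∧
  ∀ L : ℕ → Set X, (∀ i, IsPartitionBetween X (L i) (A i) (B i)) → (⋂ i, L i).Nonempty

/-- A space is strongly infinite-dimensional if it has an infinite essential family. -/
def StronglyInfiniteDimensional (X : Type*) [TopologicalSpace X] : Prop :=
  ∃ A B : ℕ → Set X, EssentialFamily X A B

/-- A space is a C-space: for every sequence of open covers `U i` there are families
`V i` of pairwise disjoint open sets, `V i` refining `U i`, with `⋃ i, V i` a cover. -/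
def IsCSpace (X : Type*) [TopologicalSpace X] : Prop :=
  ∀ U : ℕ → Set (Set X),
    (∀ i, (∀ u ∈ U i, IsOpen u) ∧ ⋃₀ U i = univ) →
    ∃ V : ℕ → Set (Set X),
      (∀ i, (∀ v ∈ V i, IsOpen v) ∧ (V i).PairwiseDisjoint id ∧
        ∀ v ∈ V i, ∃ u ∈ U i, v ⊆ u) ∧
      ⋃₀ (⋃ i, V i) = univ

section Aux

/-- A space with at most one point is a C-space. -/
lemma isCSpace_of_subsingleton (X : Type*) [TopologicalSpace X] [Subsingleton X] :
    IsCSpace X := by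
  intro U hU
  rcases isEmpty_or_nonempty X with hE | hN
  · refine ⟨fun _ => ∅, by simp, ?_⟩
    simp [Set.univ_eq_empty_iff.2 hE]
  · obtain ⟨x⟩ := hN
    have hx : x ∈ ⋃₀ U 0 := by rw [(hU 0).2]; trivial
    obtain ⟨u, hu, hxu⟩ := hx
    refine ⟨fun n => if n = 0 then {u} else ∅, ?_, ?_⟩
    · intro n
      dsimp only
      rcases eq_or_ne n 0 with rfl | hn
      · rw [if_pos rfl]
        refine ⟨?_, Set.pairwiseDisjoint_singleton u id, ?_⟩
        · intro v hv
          obtain rfl := mem_singleton_iff.1 hv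
          exact (hU 0).1 v hu
        · intro v hv
          obtain rfl := mem_singleton_iff.1 hv
          exact ⟨v, hu, subset_rfl⟩
      · rw [if_neg hn]
        simp
    · apply eq_univ_of_forall
      intro y
      have : y = x := Subsingleton.elim y x
      subst this
      exact ⟨u, ⟨_, ⟨0, rfl⟩, by simp⟩, hxu⟩

/-- `IsCSpace` transfers along homeomorphisms. -/
lemma IsCSpace.of_homeomorph {X Y : Type*} [TopologicalSpace X] [TopologicalSpace Y]
    (e : X ≃ₜ Y) (hX : IsCSpace X) : IsCSpace Y := by
  intro U hU
  obtain ⟨V, hV, hVcov⟩ := hX (fun n => (fun u => e ⁻¹' u) '' U n) (by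
    intro n
    constructor
    · rintro _ ⟨u, hu, rfl⟩
      exact ((hU n).1 u hu).preimage e.continuous
    · rw [sUnion_image, ← preimage_sUnion, (hU n).2, preimage_univ])
  refine ⟨fun n => (fun v => e.symm ⁻¹' v) '' V n, ?_, ?_⟩
  · intro n
    obtain ⟨ho, hd, hr⟩ := hV n
    refine ⟨?_, ?_, ?_⟩
    · rintro _ ⟨v, hv, rfl⟩
      exact (ho v hv).preimage e.symm.continuous
    · rintro _ ⟨v, hv, rfl⟩ _ ⟨w, hw, rfl⟩ hne
      have hvw : v ≠ w := by rintro rfl; exact hne rfl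
      simpa only [Function.onFun, id] using (hd hv hw hvw).preimage e.symm
    · rintro _ ⟨v, hv, rfl⟩
      obtain ⟨u', ⟨u, hu, rfl⟩, hsub⟩ := hr v hv
      refine ⟨u, hu, ?_⟩
      intro y hy
      have : e.symm y ∈ e ⁻¹' u := hsub hy
      simpa using this
  · apply eq_univ_of_forall
    intro y
    have : e.symm y ∈ ⋃₀ ⋃ n, V n := hVcov ▸ trivial
    obtain ⟨v, hv, hyv⟩ := this
    obtain ⟨n, hn⟩ := mem_iUnion.1 hv
    exact ⟨e.symm ⁻¹' v, ⟨_, ⟨n, rfl⟩, ⟨v, hn, rfl⟩⟩, hyv⟩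

/-- Rectangle refinement: every open cover of a product of nonempty compact metrizable
spaces is "uniformly" refined by products of members of covers of the factors. -/
lemma rect_refinement {X Y : Type*} [TopologicalSpace X] [TopologicalSpace Y]
    [CompactSpace X] [CompactSpace Y] [MetrizableSpace X] [MetrizableSpace Y]
    [Nonempty X] [Nonempty Y]
    (U : Set (Set (X × Y))) (hopen : ∀ u ∈ U, IsOpen u) (hcov : ⋃₀ U = univ) :
    ∃ (A : Set (Set X)) (B : Set (Set Y)),
      (∀ a ∈ A, IsOpen a) ∧ ⋃₀ A = univ ∧ (∀ b ∈ B, IsOpen b) ∧ ⋃₀ B = univ ∧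
      ∀ a ∈ A, ∀ b ∈ B, ∃ u ∈ U, a ×ˢ b ⊆ u := by
  letI : MetricSpace X := TopologicalSpace.metrizableSpaceMetric X
  letI : MetricSpace Y := TopologicalSpace.metrizableSpaceMetric Y
  obtain ⟨W, hW, hWle⟩ := lebesgue_number_lemma_sUnion (isCompact_univ (X := X × Y))
    hopen (by rw [hcov])
  obtain ⟨ε, hε, hεW⟩ := Metric.mem_uniformity_dist.1 hW
  refine ⟨range (fun x => Metric.ball x (ε / 2)), range (fun y => Metric.ball y (ε / 2)),
    ?_, ?_, ?_, ?_, ?_⟩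
  · rintro _ ⟨x, rfl⟩; exact Metric.isOpen_ball
  · apply eq_univ_of_forall
    intro x
    exact ⟨Metric.ball x (ε / 2), ⟨x, rfl⟩, Metric.mem_ball_self (by linarith)⟩
  · rintro _ ⟨y, rfl⟩; exact Metric.isOpen_ball
  · apply eq_univ_of_forall
    intro y
    exact ⟨Metric.ball y (ε / 2), ⟨y, rfl⟩, Metric.mem_ball_self (by linarith)⟩
  · rintro _ ⟨x, rfl⟩ _ ⟨y, rfl⟩
    rcases (Metric.ball x (ε / 2) ×ˢ Metric.ball y (ε / 2)).eq_empty_or_nonempty with he | hne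
    · have : (univ : Set (X × Y)).Nonempty := univ_nonempty
      obtain ⟨z, hz⟩ : (⋃₀ U).Nonempty := by rw [hcov]; exact this
      obtain ⟨u, hu, _⟩ := hz
      exact ⟨u, hu, by rw [he]; exact empty_subset u⟩
    · obtain ⟨p, hp⟩ := hne
      obtain ⟨u, hu, hball⟩ := hWle p (mem_univ p)
      refine ⟨u, hu, fun q hq => hball ?_⟩
      have h1 : dist p.1 q.1 < ε := by
        have := hp.1; have := hq.1
        calc dist p.1 q.1 ≤ dist p.1 x + dist x q.1 := dist_triangle _ _ _
          _ < ε / 2 + ε / 2 := by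
              exact add_lt_add (by simpa [Metric.mem_ball, dist_comm] using hp.1)
                (by simpa [Metric.mem_ball, dist_comm] using hq.1)
          _ = ε := by ring
      have h2 : dist p.2 q.2 < ε := by
        calc dist p.2 q.2 ≤ dist p.2 y + dist y q.2 := dist_triangle _ _ _
          _ < ε / 2 + ε / 2 := by
              exact add_lt_add (by simpa [Metric.mem_ball, dist_comm] using hp.2)
                (by simpa [Metric.mem_ball, dist_comm] using hq.2)
          _ = ε := by ring
      have : dist p q < ε := by
        rw [Prod.dist_eq]
        exact max_lt h1 h2
      exact hεW this

/-- The product of two compact metrizable C-spaces is a C-space (Rohm's theorem,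
compact metrizable case). -/
lemma isCSpace_prod {X Y : Type*} [TopologicalSpace X] [TopologicalSpace Y]
    [CompactSpace X] [CompactSpace Y] [MetrizableSpace X] [MetrizableSpace Y]
    (hX : IsCSpace X) (hY : IsCSpace Y) : IsCSpace (X × Y) := by
  rcases isEmpty_or_nonempty (X × Y) with hE | hN
  · intro U hU
    refine ⟨fun _ => ∅, by simp, ?_⟩
    simp [Set.univ_eq_empty_iff.2 hE]
  haveI : Nonempty X := ⟨hN.some.1⟩
  haveI : Nonempty Y := ⟨hN.some.2⟩
  intro U hU
  -- Step A: rectangle refinements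
  have hrect : ∀ n, ∃ (A : Set (Set X)) (B : Set (Set Y)),
      (∀ a ∈ A, IsOpen a) ∧ ⋃₀ A = univ ∧ (∀ b ∈ B, IsOpen b) ∧ ⋃₀ B = univ ∧
      ∀ a ∈ A, ∀ b ∈ B, ∃ u ∈ U n, a ×ˢ b ⊆ u :=
    fun n => rect_refinement (U n) (hU n).1 (hU n).2
  choose A B hAopen hAcov hBopen hBcov hABref using hrect
  -- the pairing
  set e : ℕ × ℕ ≃ ℕ := Nat.pairEquiv with he
  -- Step B: apply the C-property of X along each row
  have hFa : ∀ i : ℕ, ∃ F : ℕ → Set (Set X),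
      (∀ j, (∀ f ∈ F j, IsOpen f) ∧ (F j).PairwiseDisjoint id ∧
        ∀ f ∈ F j, ∃ a ∈ A (e (i, j)), f ⊆ a) ∧ ⋃₀ (⋃ j, F j) = univ :=
    fun i => hX (fun j => A (e (i, j))) (fun j => ⟨hAopen _, hAcov _⟩)
  choose F hF hFcov using hFa
  -- finitely many columns suffice in each row, by compactness of X
  have hsub : ∀ i : ℕ, ∃ t : Finset ℕ, univ ⊆ ⋃ j ∈ t, ⋃₀ F i j := by
    intro i
    apply isCompact_univ.elim_finite_subcover (fun j => ⋃₀ F i j)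
    · intro j
      exact isOpen_sUnion fun f hf => (hF i j).1 f hf
    · rw [← sUnion_iUnion]
      rw [hFcov i]
  choose s hs using hsub
  -- Step C: the composite covers of Y
  set C : ℕ → Set (Set Y) :=
    fun i => (fun f : ℕ → Set Y => ⋂ j ∈ s i, f j) ''
      {f | ∀ j ∈ s i, f j ∈ B (e (i, j))} with hC
  have hCopen : ∀ i, ∀ c ∈ C i, IsOpen c := by
    rintro i _ ⟨f, hf, rfl⟩
    exact isOpen_biInter_finset fun j hj => hBopen _ _ (hf j hj)
  have hCcov : ∀ i, ⋃₀ C i = univ := by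
    intro i
    apply eq_univ_of_forall
    intro y
    have : ∀ j : ℕ, ∃ b ∈ B (e (i, j)), y ∈ b := by
      intro j
      have : y ∈ ⋃₀ B (e (i, j)) := by rw [hBcov]; trivial
      exact this
    choose f hf1 hf2 using this
    exact ⟨⋂ j ∈ s i, f j, ⟨f, fun j _ => hf1 j, rfl⟩, mem_biInter fun j _ => hf2 j⟩
  obtain ⟨G, hG, hGcov⟩ := hY C (fun i => ⟨hCopen i, hCcov i⟩)
  -- Step D: the final families
  refine ⟨fun n => if (e.symm n).2 ∈ s (e.symm n).1 then
      {v | ∃ f ∈ F (e.symm n).1 (e.symm n).2, ∃ g ∈ G (e.symm n).1, v = f ×ˢ g} else ∅,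
    ?_, ?_⟩
  · intro n
    by_cases hn : (e.symm n).2 ∈ s (e.symm n).1
    swap
    · simp [hn]
    dsimp only
    rw [if_pos hn]
    set i := (e.symm n).1 with hi
    set j := (e.symm n).2 with hj
    have hen : e (i, j) = n := by
      show e ((e.symm n).1, (e.symm n).2) = n
      rw [Prod.mk.eta, e.apply_symm_apply]
    refine ⟨?_, ?_, ?_⟩
    · rintro _ ⟨f, hf, g, hg, rfl⟩
      exact ((hF i j).1 f hf).prod ((hG i).1 g hg)
    · rintro _ ⟨f, hf, g, hg, rfl⟩ _ ⟨f', hf', g', hg', rfl⟩ hne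
      rcases eq_or_ne g g' with rfl | hgg
      · have hff : f ≠ f' := by rintro rfl; exact hne rfl
        exact Set.disjoint_prod.2 (Or.inl ((hF i j).2.1 hf hf' hff))
      · exact Set.disjoint_prod.2 (Or.inr ((hG i).2.1 hg hg' hgg))
    · rintro _ ⟨f, hf, g, hg, rfl⟩
      obtain ⟨a, ha, hfa⟩ := (hF i j).2.2 f hf
      obtain ⟨c, hc, hgc⟩ := (hG i).2.2 g hg
      obtain ⟨bf, hbf, rfl⟩ := hc
      have hgb : g ⊆ bf j := hgc.trans (biInter_subset_of_mem hn)
      obtain ⟨u, hu, hsub⟩ := hABref (e (i, j)) a ha (bf j) (hbf j hn)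
      rw [hen] at hu
      exact ⟨u, hu, (Set.prod_mono hfa hgb).trans hsub⟩
  · apply eq_univ_of_forall
    rintro ⟨x, y⟩
    have hy : y ∈ ⋃₀ ⋃ i, G i := by rw [hGcov]; trivial
    obtain ⟨g, hg', hyg⟩ := hy
    obtain ⟨i, hgi⟩ := mem_iUnion.1 hg'
    have hx : x ∈ ⋃ j ∈ s i, ⋃₀ F i j := hs i (mem_univ x)
    obtain ⟨j, hj, f, hf, hxf⟩ := by simpa using hx
    refine ⟨f ×ˢ g, ?_, ⟨hxf, hyg⟩⟩
    refine mem_iUnion.2 ⟨e (i, j), ?_⟩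
    have hsymm : e.symm (e (i, j)) = (i, j) := e.symm_apply_apply _
    simp only [hsymm, hj, if_true]
    exact ⟨f, hf, g, hgi, rfl⟩

universe u v

/-- Auxiliary induction on the cardinality of the index type. -/
lemma key : ∀ (n : ℕ) (ι : Type u) (X : ι → Type v) [Fintype ι]
    [∀ i, TopologicalSpace (X i)] [∀ i, CompactSpace (X i)] [∀ i, MetrizableSpace (X i)],
    Fintype.card ι = n → (∀ i, IsCSpace (X i)) → IsCSpace (∀ i, X i) := by
  intro n
  induction n using Nat.strong_induction_on with
  | _ n IH =>
    intro ι X _ _ _ _ hcard hC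
    rcases Nat.eq_zero_or_pos n with rfl | hpos
    · haveI : IsEmpty ι := Fintype.card_eq_zero_iff.1 hcard
      haveI : Subsingleton (∀ i, X i) := ⟨fun f g => funext fun i => isEmptyElim i⟩
      exact isCSpace_of_subsingleton _
    · haveI : Nonempty ι := Fintype.card_pos_iff.1 (hcard ▸ hpos)
      obtain ⟨i⟩ := ‹Nonempty ι›
      haveI := Classical.decEq ι
      have hcard' : Fintype.card { j // j ≠ i } = n - 1 := by
        rw [← hcard]
        simp [Fintype.card_subtype_compl]
      have hlt : n - 1 < n := Nat.sub_lt hpos Nat.one_pos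
      have hrest : IsCSpace (∀ j : { j // j ≠ i }, X j) :=
        IH (n - 1) hlt { j // j ≠ i } (fun j => X j) hcard' (fun j => hC j)
      have hprod : IsCSpace (X i × ∀ j : { j // j ≠ i }, X j) :=
        isCSpace_prod (hC i) hrest
      exact hprod.of_homeomorph (Homeomorph.piSplitAt i X).symm

end Aux

/-- A finite product of compact metrizable C-spaces is a C-space (in particular `K^p` is a
C-space for a compact metrizable C-space `K`). -/
theorem stmt14 (ι : Type*) [Fintype ι] (X : ι → Type*)
    [∀ i, TopologicalSpace (X i)] [∀ i, CompactSpace (X i)] [∀ i, MetrizableSpace (X i)]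
    (h : ∀ i, IsCSpace (X i)) :
    IsCSpace (∀ i, X i) := by
  exact key (Fintype.card ι) ι X rfl h
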